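/- Let E be a pseudo effect algebra satisfying (RDP) and let {mᵢ}ᵢ∈I be a nonempty family in J(E) that is bounded above with respect to ≤⁺; set d(x) := supᵢ mᵢ(x) for x ∈ E. Then the supremum ⋁ᵢ mᵢ in J(E) satisfies (⋁ᵢ mᵢ)(x) = sup{d(x₁) + ⋯ + d(xₙ) : x = x₁ + ⋯ + xₙ, x₁, …, xₙ ∈ E} for all x ∈ E. Dually, if {mᵢ}ᵢ∈I is bounded below and e(x) := infᵢ mᵢ(x), then (⋀ᵢ mᵢ)(x) = inf{e(x₁) + ⋯ + e(xₙ) : x = x₁ + ⋯ + xₙ, x₁, …, xₙ ∈ E} for all x ∈ E. -/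
import Mathlib


/-- A pseudo effect algebra: a partial algebra `(E; +, 0, 1)` where the partial
addition is encoded as `padd : E → E → Option E` (`padd a b = some c` means
`a + b` is defined and equals `c`). -/
class PseudoEffectAlgebra (E : Type) where
  padd : E → E → Option E
  pzero : E
  pone : E
  /-- (i) `a+b` and `(a+b)+c` exist iff `b+c` and `a+(b+c)` exist ... -/
  assoc_defined : ∀ a b c : E,
    (∃ x, padd a b = some x ∧ (padd x c).isSome) ↔
      (∃ y, padd b c = some y ∧ (padd a y).isSome)
  /-- ... and in this case `(a+b)+c = a+(b+c)`. -/
  assoc_eq : ∀ a b c x y : E, padd a b = some x → padd b c = some y →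
    padd x c = padd a y
  /-- (ii) there is exactly one `d` with `a + d = 1`. -/
  exists_unique_right : ∀ a : E, ∃! d, padd a d = some pone
  /-- (ii) there is exactly one `e` with `e + a = 1`. -/
  exists_unique_left : ∀ a : E, ∃! e, padd e a = some pone
  /-- (iii) if `a+b` exists, there are `d, e` with `a+b = d+a = b+e`. -/
  shift : ∀ a b c : E, padd a b = some c →
    ∃ d e, padd d a = some c ∧ padd b e = some c
  /-- (iv) if `1+a` exists then `a = 0`. -/
  one_add : ∀ a : E, (padd pone a).isSome → a = pzero
  /-- (iv) if `a+1` exists then `a = 0`. -/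
  add_one : ∀ a : E, (padd a pone).isSome → a = pzero

namespace PseudoEffectAlgebra

variable {E : Type} [PseudoEffectAlgebra E]

/-- The induced partial order: `a ≤ b` iff `b = a + c` for some `c ∈ E`. -/
def pLe (a b : E) : Prop := ∃ c, padd a c = some b

/-- The Riesz Decomposition Property (RDP). -/
def RDP (E : Type) [PseudoEffectAlgebra E] : Prop :=
  ∀ a₁ a₂ b₁ b₂ c : E, padd a₁ a₂ = some c → padd b₁ b₂ = some c →
    ∃ d₁ d₂ d₃ d₄ : E, padd d₁ d₂ = some a₁ ∧ padd d₃ d₄ = some a₂ ∧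
      padd d₁ d₃ = some b₁ ∧ padd d₂ d₄ = some b₂

/-- A signed measure on `E`. -/
def IsSignedMeasure (m : E → ℝ) : Prop :=
  ∀ a b c : E, padd a b = some c → m c = m a + m b

/-- A (positive) measure on `E`. -/
def IsMeasure (m : E → ℝ) : Prop :=
  IsSignedMeasure m ∧ ∀ a : E, 0 ≤ m a

/-- A state on `E`. -/
def IsState (s : E → ℝ) : Prop := IsMeasure s ∧ s pone = 1

/-- A Jordan signed measure: a difference of two measures. -/
def IsJordan (m : E → ℝ) : Prop :=
  ∃ m₁ m₂ : E → ℝ, IsMeasure m₁ ∧ IsMeasure m₂ ∧ m = m₁ - m₂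

/-- `m ≤⁺ m'` iff `m' - m` is a (positive) measure. -/
def MLe (m m' : E → ℝ) : Prop := IsMeasure (m' - m)

/-- The (partial) sum `x₁ + ⋯ + xₙ` of a nonempty list of elements of `E`. -/
def lsum : List E → Option E
  | [] => some pzero
  | [a] => some a
  | a :: b :: l => (lsum (b :: l)).bind (fun s => padd a s)

/-- `m` is the supremum, in the po-group `J(E)` of Jordan signed measures ordered
by `≤⁺`, of the set `S`. -/
def IsSupIn (S : Set (E → ℝ)) (m : E → ℝ) : Prop :=
  IsJordan m ∧ (∀ t ∈ S, MLe t m) ∧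
    ∀ h : E → ℝ, IsJordan h → (∀ t ∈ S, MLe t h) → MLe m h

/-- `m` is the infimum, in the po-group `J(E)` of Jordan signed measures ordered
by `≤⁺`, of the set `S`. -/
def IsInfIn (S : Set (E → ℝ)) (m : E → ℝ) : Prop :=
  IsJordan m ∧ (∀ t ∈ S, MLe m t) ∧
    ∀ h : E → ℝ, IsJordan h → (∀ t ∈ S, MLe h t) → MLe h m

lemma isSignedMeasure_of_isJordan {m : E → ℝ} (h : IsJordan m) : IsSignedMeasure m := by
  obtain ⟨m₁, m₂, h₁, h₂, rfl⟩ := h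
  intro a b c hc
  have e1 := h₁.1 a b c hc
  have e2 := h₂.1 a b c hc
  simp only [Pi.sub_apply]
  linarith

lemma lsum_singleton (a : E) : lsum [a] = some a := rfl

lemma lsum_cons (a : E) (l : List E) (h : l ≠ []) :
    lsum (a :: l) = (lsum l).bind (fun s => padd a s) := by
  cases l with
  | nil => exact absurd rfl h
  | cons b t => rfl

lemma lsum_append {l₂ : List E} (h₂ : l₂ ≠ []) {b : E} (hb : lsum l₂ = some b) :
    ∀ l₁ : List E, l₁ ≠ [] → ∀ {a c : E}, lsum l₁ = some a → padd a b = some c →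
      lsum (l₁ ++ l₂) = some c := by
  intro l₁
  induction l₁ with
  | nil => intro h; exact absurd rfl h
  | cons x t ih =>
    intro _ a c ha hc
    cases t with
    | nil =>
      rw [lsum_singleton] at ha
      injection ha with ha; subst ha
      rw [List.singleton_append, lsum_cons _ _ h₂, hb]
      exact hc
    | cons y u =>
      rw [lsum_cons x (y :: u) (by simp)] at ha
      obtain ⟨s, hs, hxs⟩ : ∃ s, lsum (y :: u) = some s ∧ padd x s = some a := by
        cases hss : lsum (y :: u) with
        | none => rw [hss] at ha; exact absurd ha (by simp)
        | some s => rw [hss] at ha; exact ⟨s, rfl, ha⟩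
      obtain ⟨sb, hsb, -⟩ := (assoc_defined x s b).mp
        ⟨a, hxs, Option.isSome_iff_exists.mpr ⟨c, hc⟩⟩
      have heq : padd a b = padd x sb := assoc_eq x s b a sb hxs hsb
      have hxsb : padd x sb = some c := heq.symm.trans hc
      have hrec : lsum ((y :: u) ++ l₂) = some sb := ih (by simp) hs hsb
      rw [List.cons_append, lsum_cons _ _ (by simp), hrec]
      exact hxsb

lemma rdp_split (hRDP : RDP E) (d : E → ℝ)
    (hd : ∀ a b c : E, padd a b = some c → d c ≤ d a + d b) :
    ∀ l : List E, l ≠ [] → ∀ {a b c : E}, lsum l = some c → padd a b = some c →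
      ∃ la lb : List E, la ≠ [] ∧ lb ≠ [] ∧ lsum la = some a ∧ lsum lb = some b ∧
        (l.map d).sum ≤ (la.map d).sum + (lb.map d).sum := by
  intro l
  induction l with
  | nil => intro h; exact absurd rfl h
  | cons x t ih =>
    intro _ a b c hc hab
    cases t with
    | nil =>
      rw [lsum_singleton] at hc
      injection hc with hc; subst hc
      refine ⟨[a], [b], by simp, by simp, rfl, rfl, ?_⟩
      simpa using hd a b x hab
    | cons y u =>
      rw [lsum_cons x (y :: u) (by simp)] at hc
      obtain ⟨s, hs, hxs⟩ : ∃ s, lsum (y :: u) = some s ∧ padd x s = some c := by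
        cases hss : lsum (y :: u) with
        | none => rw [hss] at hc; exact absurd hc (by simp)
        | some s => rw [hss] at hc; exact ⟨s, rfl, hc⟩
      obtain ⟨d₁, d₂, d₃, d₄, h12, h34, h13, h24⟩ := hRDP x s a b c hxs hab
      obtain ⟨la', lb', hlane, hlbne, hla, hlb, hsum⟩ := ih (by simp) hs h34
      refine ⟨d₁ :: la', d₂ :: lb', by simp, by simp, ?_, ?_, ?_⟩
      · rw [lsum_cons _ _ hlane, hla]; exact h13
      · rw [lsum_cons _ _ hlbne, hlb]; exact h24
      · have hx := hd d₁ d₂ x h12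
        simp only [List.map_cons, List.sum_cons] at *
        linarith

lemma sum_le_of_ub {d g : E → ℝ} (hg : IsSignedMeasure g) (hdg : ∀ y, d y ≤ g y) :
    ∀ l : List E, l ≠ [] → ∀ {x : E}, lsum l = some x → (l.map d).sum ≤ g x := by
  intro l
  induction l with
  | nil => intro h; exact absurd rfl h
  | cons x t ih =>
    intro _ z hz
    cases t with
    | nil =>
      rw [lsum_singleton] at hz
      injection hz with hz; subst hz
      simpa using hdg x
    | cons y u =>
      rw [lsum_cons x (y :: u) (by simp)] at hz
      obtain ⟨s, hs, hxs⟩ : ∃ s, lsum (y :: u) = some s ∧ padd x s = some z := by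
        cases hss : lsum (y :: u) with
        | none => rw [hss] at hz; exact absurd hz (by simp)
        | some s => rw [hss] at hz; exact ⟨s, rfl, hz⟩
      have := ih (by simp) hs
      have hgz := hg x s z hxs
      simp only [List.map_cons, List.sum_cons] at *
      linarith [hdg x]

lemma sup_formula (hRDP : RDP E) {ι : Type} [Nonempty ι] (m : ι → E → ℝ)
    (hm : ∀ i, IsJordan (m i)) (b : E → ℝ) (hbJ : IsJordan b) (hb : ∀ i, MLe (m i) b)
    (v : E → ℝ) (hv : IsSupIn (Set.range m) v) (x : E) :
    v x = sSup {r : ℝ | ∃ l : List E, l ≠ [] ∧ lsum l = some x ∧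
      r = (l.map (fun y => ⨆ i, m i y)).sum} := by
  set d : E → ℝ := fun y => ⨆ i, m i y with hd_def
  set S : E → Set ℝ := fun z => {r : ℝ | ∃ l : List E, l ≠ [] ∧ lsum l = some z ∧
      r = (l.map d).sum} with hS_def
  show v x = sSup (S x)
  have hsm : ∀ i, IsSignedMeasure (m i) := fun i => isSignedMeasure_of_isJordan (hm i)
  have hbS : IsSignedMeasure b := isSignedMeasure_of_isJordan hbJ
  have hmb : ∀ i y, m i y ≤ b y := by
    intro i y
    have := (hb i).2 y
    simp only [Pi.sub_apply] at this; linarith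
  have hbdd : ∀ y, BddAbove (Set.range fun i => m i y) := by
    intro y
    exact ⟨b y, by rintro r ⟨i, rfl⟩; exact hmb i y⟩
  have hdle : ∀ i y, m i y ≤ d y := fun i y => le_ciSup (hbdd y) i
  have hdub : ∀ (g : E → ℝ), (∀ i y, m i y ≤ g y) → ∀ y, d y ≤ g y := by
    intro g hg y
    exact ciSup_le fun i => hg i y
  have hd_sub : ∀ a b' c : E, padd a b' = some c → d c ≤ d a + d b' := by
    intro a b' c h
    refine ciSup_le fun i => ?_
    rw [hsm i a b' c h]
    exact add_le_add (hdle i a) (hdle i b')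
  have hSne : ∀ z, (S z).Nonempty := fun z => ⟨d z, [z], by simp, rfl, by simp⟩
  have hSub : ∀ (g : E → ℝ), IsSignedMeasure g → (∀ y, d y ≤ g y) →
      ∀ z, ∀ r ∈ S z, r ≤ g z := by
    rintro g hg hdg z r ⟨l, hne, hl, rfl⟩
    exact sum_le_of_ub hg hdg l hne hl
  have hdb : ∀ y, d y ≤ b y := hdub b hmb
  have hSbd : ∀ z, BddAbove (S z) := fun z => ⟨b z, fun r hr => hSub b hbS hdb z r hr⟩
  set D : E → ℝ := fun z => sSup (S z) with hD_def
  have hdD : ∀ z, d z ≤ D z := fun z => le_csSup (hSbd z) ⟨[z], by simp, rfl, by simp⟩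
  have hDadd : IsSignedMeasure D := by
    intro a c e h
    have le₁ : D e ≤ D a + D c := by
      refine csSup_le (hSne e) ?_
      rintro r ⟨l, hne, hl, rfl⟩
      obtain ⟨la, lb, hlane, hlbne, hla, hlb, hsum⟩ := rdp_split hRDP d hd_sub l hne hl h
      have h1 : (la.map d).sum ≤ D a := le_csSup (hSbd a) ⟨la, hlane, hla, rfl⟩
      have h2 : (lb.map d).sum ≤ D c := le_csSup (hSbd c) ⟨lb, hlbne, hlb, rfl⟩
      linarith
    have key : ∀ r ∈ S a, ∀ r' ∈ S c, r + r' ≤ D e := by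
      rintro r ⟨l₁, h1ne, hl1, rfl⟩ r' ⟨l₂, h2ne, hl2, rfl⟩
      have : lsum (l₁ ++ l₂) = some e := lsum_append h2ne hl2 l₁ h1ne hl1 h
      refine le_csSup (hSbd e) ⟨l₁ ++ l₂, by simp [h1ne], this, ?_⟩
      simp [List.map_append]
    have le₂ : D a + D c ≤ D e := by
      have ha : D a ≤ D e - D c := by
        refine csSup_le (hSne a) fun r hr => ?_
        have hc : D c ≤ D e - r := by
          refine csSup_le (hSne c) fun r' hr' => ?_
          have := key r hr r' hr'
          linarith
        linarith
      linarith
    simp only [hD_def]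
    linarith
  have hDub : ∀ i, MLe (m i) D := by
    intro i
    constructor
    · intro a c e h
      have h1 := hDadd a c e h
      have h2 := hsm i a c e h
      simp only [Pi.sub_apply]
      linarith
    · intro y
      have := (hdle i y).trans (hdD y)
      simp only [Pi.sub_apply]; linarith
  have hDJ : IsJordan D := by
    obtain ⟨i₀⟩ := ‹Nonempty ι›
    obtain ⟨p, q, hp, hq, hpq⟩ := hm i₀
    refine ⟨(D - m i₀) + p, q, ⟨?_, ?_⟩, hq, ?_⟩
    · intro a c e h
      have h1 := (hDub i₀).1 a c e h
      have h2 := hp.1 a c e h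
      simp only [Pi.add_apply, Pi.sub_apply] at *
      linarith
    · intro y
      have h1 := (hDub i₀).2 y
      have h2 := hp.2 y
      simp only [Pi.add_apply, Pi.sub_apply] at *
      linarith
    · funext y
      have : m i₀ y = p y - q y := by rw [hpq]; rfl
      simp only [Pi.sub_apply, Pi.add_apply]
      linarith
  have hvS : IsSignedMeasure v := isSignedMeasure_of_isJordan hv.1
  have hmv : ∀ i y, m i y ≤ v y := by
    intro i y
    have := (hv.2.1 (m i) ⟨i, rfl⟩).2 y
    simp only [Pi.sub_apply] at this; linarith
  have hup : sSup (S x) ≤ v x :=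
    csSup_le (hSne x) fun r hr => hSub v hvS (hdub v hmv) x r hr
  have hlow : v x ≤ D x := by
    have hmle : MLe v D := hv.2.2 D hDJ (by rintro t ⟨i, rfl⟩; exact hDub i)
    have := hmle.2 x
    simp only [Pi.sub_apply] at this; linarith
  exact le_antisymm hlow hup

lemma isJordan_neg {m : E → ℝ} (h : IsJordan m) : IsJordan (-m) := by
  obtain ⟨m₁, m₂, h₁, h₂, rfl⟩ := h
  exact ⟨m₂, m₁, h₂, h₁, by ring⟩

omit [PseudoEffectAlgebra E] in
lemma sum_map_neg' (e : E → ℝ) (l : List E) :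
    (l.map (fun y => -(e y))).sum = -(l.map e).sum := by
  induction l with
  | nil => simp
  | cons a t ih => simp [ih]; ring

lemma iSup_neg_real {κ : Type} (f : κ → ℝ) : (⨆ i, -f i) = -⨅ i, f i := by
  have hr : Set.range (fun i => -f i) = -Set.range f := by
    ext r
    simp only [Set.mem_neg, Set.mem_range]
    constructor
    · rintro ⟨i, rfl⟩; exact ⟨i, by simp⟩
    · rintro ⟨i, hi⟩; exact ⟨i, by rw [hi]; simp⟩
  rw [iSup, iInf, hr, Real.sInf_def, neg_neg]

/-- Theorem 3.4(b),(c): formulas for the supremum and infimum in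
`J(E)` of a nonempty bounded family of Jordan signed measures. -/
theorem stmt5 (hRDP : RDP E) {ι : Type} [Nonempty ι] (m : ι → E → ℝ)
    (hm : ∀ i, IsJordan (m i)) :
    ((∃ b, IsJordan b ∧ ∀ i, MLe (m i) b) →
      ∀ v : E → ℝ, IsSupIn (Set.range m) v → ∀ x : E,
        v x = sSup {r : ℝ | ∃ l : List E, l ≠ [] ∧ lsum l = some x ∧
          r = (l.map (fun y => ⨆ i, m i y)).sum}) ∧
    ((∃ b, IsJordan b ∧ ∀ i, MLe b (m i)) →
      ∀ w : E → ℝ, IsInfIn (Set.range m) w → ∀ x : E,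
        w x = sInf {r : ℝ | ∃ l : List E, l ≠ [] ∧ lsum l = some x ∧
          r = (l.map (fun y => ⨅ i, m i y)).sum}) := by
  constructor
  · rintro ⟨b, hbJ, hb⟩ v hv x
    exact sup_formula hRDP m hm b hbJ hb v hv x
  · rintro ⟨b, hbJ, hb⟩ w hw x
    set m' : ι → E → ℝ := fun i => -(m i) with hm'_def
    have hm' : ∀ i, IsJordan (m' i) := fun i => isJordan_neg (hm i)
    have hb' : ∀ i, MLe (m' i) (-b) := by
      intro i
      show IsMeasure ((-b) - m' i)
      have hfun : (-b) - m' i = (m i) - b := by simp only [hm'_def]; ring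
      rw [hfun]; exact hb i
    have hsup : IsSupIn (Set.range m') (-w) := by
      refine ⟨isJordan_neg hw.1, ?_, ?_⟩
      · rintro t ⟨i, rfl⟩
        show IsMeasure ((-w) - m' i)
        have hfun : (-w) - m' i = (m i) - w := by simp only [hm'_def]; ring
        rw [hfun]; exact hw.2.1 (m i) ⟨i, rfl⟩
      · intro h hJ hub
        have h1 : ∀ i, MLe (-h) (m i) := by
          intro i
          show IsMeasure ((m i) - (-h))
          have hfun : (m i) - (-h) = h - m' i := by simp only [hm'_def]; ring
          rw [hfun]; exact hub (m' i) ⟨i, rfl⟩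
        have h2 : MLe (-h) w := hw.2.2 (-h) (isJordan_neg hJ)
          (by rintro t ⟨i, rfl⟩; exact h1 i)
        show IsMeasure (h - (-w))
        have hfun : h - (-w) = w - (-h) := by ring
        rw [hfun]; exact h2
    have hkey := sup_formula hRDP m' hm' (-b) (isJordan_neg hbJ) hb' (-w) hsup x
    have hpt : ∀ y : E, (⨆ i, m' i y) = -(⨅ i, m i y) := by
      intro y
      have : (fun i => m' i y) = fun i => -(m i y) := by
        funext i; simp [hm'_def]
      rw [show (⨆ i, m' i y) = ⨆ i, -(m i y) by rw [iSup, iSup, this]]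
      exact iSup_neg_real (fun i => m i y)
    have hset : {r : ℝ | ∃ l : List E, l ≠ [] ∧ lsum l = some x ∧
          r = (l.map (fun y => ⨆ i, m' i y)).sum}
        = -{r : ℝ | ∃ l : List E, l ≠ [] ∧ lsum l = some x ∧
          r = (l.map (fun y => ⨅ i, m i y)).sum} := by
      have hmapeq : (fun y : E => ⨆ i, m' i y) = fun y => -(⨅ i, m i y) := funext hpt
      ext r
      simp only [Set.mem_neg, Set.mem_setOf_eq, hmapeq]
      constructor
      · rintro ⟨l, h1, h2, rfl⟩
        exact ⟨l, h1, h2, by rw [sum_map_neg' (fun y => ⨅ i, m i y) l, neg_neg]⟩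
      · rintro ⟨l, h1, h2, h3⟩
        refine ⟨l, h1, h2, ?_⟩
        rw [sum_map_neg' (fun y => ⨅ i, m i y) l, ← h3, neg_neg]
    rw [hset] at hkey
    have hsups : sSup (-{r : ℝ | ∃ l : List E, l ≠ [] ∧ lsum l = some x ∧
          r = (l.map (fun y => ⨅ i, m i y)).sum})
        = -sInf {r : ℝ | ∃ l : List E, l ≠ [] ∧ lsum l = some x ∧
          r = (l.map (fun y => ⨅ i, m i y)).sum} := by
      rw [Real.sInf_def, neg_neg]
    rw [hsups] at hkey
    have : (-w) x = -(w x) := rfl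
    rw [this] at hkey
    linarith

end PseudoEffectAlgebra
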